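/- arXiv:1509.06424 — 2 statements merged into one kernel-verified Lean document; each statement's English description precedes it below -/
import Mathlib

section
/- Let K be an abstract simplicial complex on a linearly ordered vertex set, Y a simplicial set, and δ a twisted structure on K with coefficients in Y. Then the twisted face maps d_i^δ on the graded collection {Y_n × S(K)_n} satisfy the Δ-identity: for all n ≥ 2 and all 0 ≤ j ≤ i ≤ n−1, d_i^δ ∘ d_j^δ = d_j^δ ∘ d_{i+1}^δ as maps Y_n × S(K)_n → Y_{n−2} × S(K)_{n−2}. -/
open CategoryTheory Simplicial

universe u

/-- An abstract simplicial complex with vertices in a type `V`: a collection of nonempty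
finite subsets of `V` closed under passage to nonempty subsets. -/
structure AbsSimplicialComplex (V : Type u) where
  faces : Set (Finset V)
  nonempty_of_mem : ∀ s ∈ faces, s.Nonempty
  down_closed : ∀ s ∈ faces, ∀ t ⊆ s, t.Nonempty → t ∈ faces

variable {V : Type u} [LinearOrder V]

/-- The `n`-simplices of the simplicial set `S(K)`: weakly increasing `(n+1)`-tuples of
vertices spanning a simplex of `K`. -/
def SSimplex (K : AbsSimplicialComplex V) (n : ℕ) : Type u :=
  { v : Fin (n + 1) → V // Monotone v ∧ Finset.image v Finset.univ ∈ K.faces }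

/-- The face `d_i` of `S(K)`, deleting the `i`-th vertex. -/
def SSimplex.face {K : AbsSimplicialComplex V} {n : ℕ} (i : Fin (n + 2))
    (v : SSimplex K (n + 1)) : SSimplex K n :=
  ⟨v.1 ∘ i.succAbove,
    v.2.1.comp (Fin.strictMono_succAbove i).monotone,
    K.down_closed _ v.2.2 _
      (by rw [← Finset.image_image]; exact Finset.image_subset_image (Finset.subset_univ _))
      (Finset.image_nonempty.mpr Finset.univ_nonempty)⟩

/-- The twisted face map `d_i^δ : Y_{n+1} × S(K)_{n+1} → Y_n × S(K)_n`,
`d_i^δ(y, (v₀,…,v_{n+1})) = (δ_{v_i}(d_i y), (v₀,…,v̂_i,…,v_{n+1}))`. -/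
def twistedFace {K : AbsSimplicialComplex V} (Y : SSet.{u})
    (δ : V → (Y ⟶ Y)) {n : ℕ} (i : Fin (n + 2)) :
    Y _⦋n + 1⦌ × SSimplex K (n + 1) → Y _⦋n⦌ × SSimplex K n :=
  fun p => ((δ (p.2.1 i)).app (Opposite.op (SimplexCategory.mk n)) (Y.δ i p.1),
    p.2.face i)

/-- for a twisted structure `δ` on an abstract simplicial complex `K` (on a
linearly ordered vertex set) with coefficients in a simplicial set `Y`, the twisted face maps
on `{Y_n × S(K)_n}` satisfy the Δ-identity `d_i^δ ∘ d_j^δ = d_j^δ ∘ d_{i+1}^δ` for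
`0 ≤ j ≤ i ≤ n − 1`. -/
theorem twistedFace_delta_identity {K : AbsSimplicialComplex V} (Y : SSet.{u})
    (δ : V → (Y ⟶ Y))
    (hcomm : ∀ v w : V, ({v, w} : Finset V) ∈ K.faces →
      δ v ≫ δ w = δ w ≫ δ v)
    {n : ℕ} (i j : Fin (n + 2)) (hij : j ≤ i) :
    (twistedFace (K := K) Y δ i) ∘ (twistedFace Y δ j.castSucc) =
      (twistedFace Y δ j) ∘ (twistedFace Y δ i.succ) := by

  funext p
  obtain ⟨y, v⟩ := p
  have hji : (i.succ).succAbove j = j.castSucc :=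
    Fin.succAbove_of_castSucc_lt _ _ (by
      rw [Fin.castSucc_lt_succ_iff]; exact hij)
  have hij' : (j.castSucc).succAbove i = i.succ :=
    Fin.succAbove_of_le_castSucc _ _ (by
      simpa using hij)
  have key : ∀ k : Fin (n + 1),
      (j.castSucc).succAbove (i.succAbove k) = (i.succ).succAbove (j.succAbove k) := by
    intro k
    have h := SimplexCategory.δ_comp_δ (i := j) (j := i) hij
    have h2 := congrArg (fun f => f.toOrderHom k) h
    exact h2.symm
  have hface : (v.face j.castSucc).face i = (v.face i.succ).face j := by
    apply Subtype.ext
    funext k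
    show v.1 ((j.castSucc).succAbove (i.succAbove k)) = v.1 ((i.succ).succAbove (j.succAbove k))
    rw [key k]
  have hmem : ({v.1 j.castSucc, v.1 i.succ} : Finset V) ∈ K.faces := by
    refine K.down_closed _ v.2.2 _ ?_ ⟨_, Finset.mem_insert_self _ _⟩
    intro x hx
    simp only [Finset.mem_insert, Finset.mem_singleton] at hx
    rcases hx with h | h <;> subst h <;>
      exact Finset.mem_image_of_mem _ (Finset.mem_univ _)
  have hc := hcomm _ _ hmem
  simp only [twistedFace, SSimplex.face, Function.comp_apply]
  refine Prod.ext ?_ hface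
  show (δ (v.1 ((j.castSucc).succAbove i))).app _
      (Y.δ i ((δ (v.1 j.castSucc)).app _ (Y.δ j.castSucc y))) =
    (δ (v.1 ((i.succ).succAbove j))).app _
      (Y.δ j ((δ (v.1 i.succ)).app _ (Y.δ i.succ y)))
  rw [hji, hij']
  have nat1 : Y.δ i ((δ (v.1 j.castSucc)).app _ (Y.δ j.castSucc y)) =
      (δ (v.1 j.castSucc)).app _ (Y.δ i (Y.δ j.castSucc y)) := by
    exact types_congr_hom ((δ (v.1 j.castSucc)).naturality
      (SimplexCategory.δ i).op).symm (Y.δ j.castSucc y)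
  have nat2 : Y.δ j ((δ (v.1 i.succ)).app _ (Y.δ i.succ y)) =
      (δ (v.1 i.succ)).app _ (Y.δ j (Y.δ i.succ y)) := by
    exact types_congr_hom ((δ (v.1 i.succ)).naturality
      (SimplexCategory.δ j).op).symm (Y.δ i.succ y)
  rw [nat1, nat2]
  have hδδ : Y.δ j (Y.δ i.succ y) = Y.δ i (Y.δ j.castSucc y) := by
    have := CategoryTheory.SimplicialObject.δ_comp_δ (X := Y) (i := j) (j := i) hij
    exact types_congr_hom this y
  rw [hδδ]
  have := congrFun (congrArg (fun f => f.app (Opposite.op (SimplexCategory.mk n))) hc)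
    (Y.δ i (Y.δ j.castSucc y))
  simp only [NatTrans.comp_app, types_comp_apply] at this
  exact this
end

section
/- Let G be a simplicial group, C a small category, and δ a nonsingular twisted structure on C with coefficients in G. Then the twisted face homomorphisms d_i^δ and twisted degeneracy homomorphisms s_i^δ on the sequence of groups {F^G[C]_n} satisfy all simplicial identities: d_i^δ d_j^δ = d_j^δ d_{i+1}^δ for i ≥ j; s_j^δ s_i^δ = s_{i+1}^δ s_j^δ for i ≥ j; d_i^δ s_j^δ = s_{j−1}^δ d_i^δ for i < j; d_j^δ s_j^δ = id = d_{j+1}^δ s_j^δ; and d_i^δ s_j^δ = s_j^δ d_{i−1}^δ for i > j+1. Hence F^G_δ[C] = {F^G[C]_n} is a simplicial group. -/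
open CategoryTheory Simplicial

universe u

namespace TwistedSG

variable (C : Type u) [SmallCategory C] (G : SimplicialObject GrpCat.{u}) (a₀ : C)

/-- The group of `n`-simplices of the simplicial group `G`. -/
abbrev Gn (n : ℕ) : Type u := ↥(G.obj (Opposite.op (SimplexCategory.mk n)))

/-- The face map of the nerve of `C` (whose `n`-simplices are `ComposableArrows C n`). -/
def nerveFace {n : ℕ} (i : Fin (n + 2)) (x : ComposableArrows C (n + 1)) :
    ComposableArrows C n :=
  (nerve C).δ i x

/-- The degeneracy map of the nerve of `C`. -/
def nerveDegen {n : ℕ} (i : Fin (n + 1)) (x : ComposableArrows C n) :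
    ComposableArrows C (n + 1) :=
  (nerve C).σ i x

/-- The totally degenerate `n`-simplex `a₀ⁿ` of the nerve at the base object `a₀`. -/
def basept (n : ℕ) : ComposableArrows C n :=
  (CategoryTheory.Functor.const (Fin (n + 1))).obj a₀

/-- The free product of copies of `G_n` indexed by the `n`-simplices of the nerve. -/
abbrev FreeProd (n : ℕ) : Type u :=
  Monoid.CoprodI (fun _ : ComposableArrows C n => Gn G n)

/-- The inclusion of the copy of `G_n` labelled by the simplex `x`. -/
def incl {n : ℕ} (x : ComposableArrows C n) : Gn G n →* FreeProd C G n :=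
  Monoid.CoprodI.of (M := fun _ : ComposableArrows C n => Gn G n) (i := x)

/-- `F^G[C]_n`: the quotient of the free product of the copies `(G_n)_x`, `x ∈ N(C)_n`,
by the normal closure of the copy indexed by the basepoint simplex `a₀ⁿ`. -/
abbrev FG (n : ℕ) : Type u :=
  FreeProd C G n ⧸ Subgroup.normalClosure (Set.range (incl C G (basept C a₀ n)))

/-- The twisted face homomorphism on the free product, with values in the quotient:
`g_x ↦ (δ_{v_i}(d_i g))_{d_i x}`. -/
noncomputable def dFaceAux (δ : C → (G ≅ G)) {n : ℕ} (i : Fin (n + 2)) :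
    FreeProd C G (n + 1) →* FG C G a₀ n :=
  Monoid.CoprodI.lift fun x =>
    ((QuotientGroup.mk' _).comp (incl C G (nerveFace C i x))).comp
      ((((δ (x.obj i)).hom.app (Opposite.op (SimplexCategory.mk n))).hom :
          Gn G n →* Gn G n).comp
        ((G.δ i).hom : Gn G (n + 1) →* Gn G n))

lemma nerveFace_basept {n : ℕ} (i : Fin (n + 2)) :
    nerveFace C i (basept C a₀ (n + 1)) = basept C a₀ n := rfl

lemma nerveDegen_basept {n : ℕ} (i : Fin (n + 1)) :
    nerveDegen C i (basept C a₀ n) = basept C a₀ (n + 1) := rfl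

/-- The twisted face homomorphism `d_i^δ : F^G[C]_{n+1} → F^G[C]_n`, determined by
`d_i^δ(g_x) = (δ_{v_i}(d_i g))_{d_i x}`. -/
noncomputable def dFace (δ : C → (G ≅ G)) {n : ℕ} (i : Fin (n + 2)) :
    FG C G a₀ (n + 1) →* FG C G a₀ n :=
  QuotientGroup.lift _ (dFaceAux C G a₀ δ i) (by
    have hsub : Set.range (incl C G (basept C a₀ (n + 1))) ⊆
        ↑(dFaceAux C G a₀ δ i).ker := by
      rintro _ ⟨g, rfl⟩
      have : dFaceAux C G a₀ δ i (incl C G (basept C a₀ (n + 1)) g) =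
          (QuotientGroup.mk' _) (incl C G (basept C a₀ n)
            ((((δ ((basept C a₀ (n+1)).obj i)).hom.app (Opposite.op (SimplexCategory.mk n)))).hom
              (((G.δ i).hom : Gn G (n + 1) →* Gn G n) g))) := by
        simp only [dFaceAux, incl, Monoid.CoprodI.lift_of]; rfl
      rw [SetLike.mem_coe, MonoidHom.mem_ker, this, QuotientGroup.mk'_apply,
        QuotientGroup.eq_one_iff]
      exact Subgroup.subset_normalClosure ⟨_, rfl⟩
    exact fun y hy => MonoidHom.mem_ker.mp (Subgroup.normalClosure_le_normal hsub hy))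

/-- The twisted degeneracy homomorphism on the free product, with values in the quotient:
`g_x ↦ (δ_{v_i}⁻¹(s_i g))_{s_i x}`. -/
noncomputable def sDegenAux (δ : C → (G ≅ G)) {n : ℕ} (i : Fin (n + 1)) :
    FreeProd C G n →* FG C G a₀ (n + 1) :=
  Monoid.CoprodI.lift fun x =>
    ((QuotientGroup.mk' _).comp (incl C G (nerveDegen C i x))).comp
      ((((δ (x.obj i)).inv.app (Opposite.op (SimplexCategory.mk (n + 1)))).hom :
          Gn G (n + 1) →* Gn G (n + 1)).comp
        ((G.σ i).hom : Gn G n →* Gn G (n + 1)))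

/-- The twisted degeneracy homomorphism `s_i^δ : F^G[C]_n → F^G[C]_{n+1}`, determined by
`s_i^δ(g_x) = (δ_{v_i}⁻¹(s_i g))_{s_i x}`. -/
noncomputable def sDegen (δ : C → (G ≅ G)) {n : ℕ} (i : Fin (n + 1)) :
    FG C G a₀ n →* FG C G a₀ (n + 1) :=
  QuotientGroup.lift _ (sDegenAux C G a₀ δ i) (by
    have hsub : Set.range (incl C G (basept C a₀ n)) ⊆
        ↑(sDegenAux C G a₀ δ i).ker := by
      rintro _ ⟨g, rfl⟩
      have : sDegenAux C G a₀ δ i (incl C G (basept C a₀ n) g) =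
          (QuotientGroup.mk' _) (incl C G (basept C a₀ (n + 1))
            ((((δ ((basept C a₀ n).obj i)).inv.app (Opposite.op (SimplexCategory.mk (n + 1))))).hom
              (((G.σ i).hom : Gn G n →* Gn G (n + 1)) g))) := by
        simp only [sDegenAux, incl, Monoid.CoprodI.lift_of]; rfl
      rw [SetLike.mem_coe, MonoidHom.mem_ker, this, QuotientGroup.mk'_apply,
        QuotientGroup.eq_one_iff]
      exact Subgroup.subset_normalClosure ⟨_, rfl⟩
    exact fun y hy => MonoidHom.mem_ker.mp (Subgroup.normalClosure_le_normal hsub hy))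

end TwistedSG

namespace TwistedSG

section Helpers

variable {C : Type u} [SmallCategory C] {G : SimplicialObject GrpCat.{u}} (a₀ : C)
  (δ : C → (G ≅ G))

lemma FG_hom_ext {n : ℕ} {M : Type*} [Monoid M] {f g : FG C G a₀ n →* M}
    (h : ∀ (x : ComposableArrows C n) (a : Gn G n),
      f ((QuotientGroup.mk' _) (incl C G x a)) = g ((QuotientGroup.mk' _) (incl C G x a))) :
    f = g :=
  QuotientGroup.monoidHom_ext _ (Monoid.CoprodI.ext_hom _ _ fun x => MonoidHom.ext fun a => h x a)

lemma dFace_mk {n : ℕ} (i : Fin (n + 2)) (x : ComposableArrows C (n + 1)) (g : Gn G (n + 1)) :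
    dFace C G a₀ δ i ((QuotientGroup.mk' _) (incl C G x g)) =
      (QuotientGroup.mk' _) (incl C G (nerveFace C i x)
        (((δ (x.obj i)).hom.app (Opposite.op (SimplexCategory.mk n))).hom
          (((G.δ i).hom : Gn G (n + 1) →* Gn G n) g))) := by
  simp only [dFace, dFaceAux, incl, QuotientGroup.mk'_apply, Monoid.CoprodI.lift_of,
    MonoidHom.comp_apply]
  rfl

lemma sDegen_mk {n : ℕ} (i : Fin (n + 1)) (x : ComposableArrows C n) (g : Gn G n) :
    sDegen C G a₀ δ i ((QuotientGroup.mk' _) (incl C G x g)) =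
      (QuotientGroup.mk' _) (incl C G (nerveDegen C i x)
        (((δ (x.obj i)).inv.app (Opposite.op (SimplexCategory.mk (n + 1)))).hom
          (((G.σ i).hom : Gn G n →* Gn G (n + 1)) g))) := by
  simp only [sDegen, sDegenAux, incl, QuotientGroup.mk'_apply, Monoid.CoprodI.lift_of,
    MonoidHom.comp_apply]
  rfl

/-- naturality of a natural transformation `G ⟶ G` against `G.δ`. -/
lemma natδ (τ : G ⟶ G) {n : ℕ} (i : Fin (n + 2)) (g : Gn G (n + 1)) :
    ((G.δ i).hom : Gn G (n + 1) →* Gn G n) ((τ.app (Opposite.op (SimplexCategory.mk (n + 1)))).hom g) =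
      (τ.app (Opposite.op (SimplexCategory.mk n))).hom (((G.δ i).hom : Gn G (n + 1) →* Gn G n) g) := by
  have h := τ.naturality (SimplexCategory.δ i).op
  exact (congrArg (fun (φ : G.obj _ ⟶ G.obj _) => φ.hom g) h).symm

lemma natσ (τ : G ⟶ G) {n : ℕ} (i : Fin (n + 1)) (g : Gn G n) :
    ((G.σ i).hom : Gn G n →* Gn G (n + 1)) ((τ.app (Opposite.op (SimplexCategory.mk n))).hom g) =
      (τ.app (Opposite.op (SimplexCategory.mk (n + 1)))).hom (((G.σ i).hom : Gn G n →* Gn G (n + 1)) g) := by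
  have h := τ.naturality (SimplexCategory.σ i).op
  exact (congrArg (fun (φ : G.obj _ ⟶ G.obj _) => φ.hom g) h).symm

lemma comm_app {τ₁ τ₂ : G ⟶ G} (H : τ₁ ≫ τ₂ = τ₂ ≫ τ₁) (m : SimplexCategoryᵒᵖ)
    (g : ↥(G.obj m)) : (τ₂.app m).hom ((τ₁.app m).hom g) = (τ₁.app m).hom ((τ₂.app m).hom g) := by
  have h := congrArg (fun (τ : G ⟶ G) => NatTrans.app τ m) H
  simp only [NatTrans.comp_app] at h
  exact congrArg (fun (φ : G.obj m ⟶ G.obj m) => φ.hom g) h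

lemma inv_hom_comm {A B : G ≅ G} (H : A.hom ≫ B.hom = B.hom ≫ A.hom) :
    B.inv ≫ A.hom = A.hom ≫ B.inv := by
  rw [Iso.inv_comp_eq, ← Category.assoc, ← H, Category.assoc, Iso.hom_inv_id, Category.comp_id]

lemma inv_inv_comm {A B : G ≅ G} (H : A.hom ≫ B.hom = B.hom ≫ A.hom) :
    B.inv ≫ A.inv = A.inv ≫ B.inv := by
  rw [Iso.inv_comp_eq, ← Category.assoc, ← inv_hom_comm H.symm, Category.assoc,
    Iso.hom_inv_id, Category.comp_id]

lemma vert_mor {m : ℕ} (x : ComposableArrows C m) {j k : Fin (m + 1)} (h : j ≤ k) :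
    Nonempty (x.obj j ⟶ x.obj k) := ⟨x.map (homOfLE h)⟩

/-- elementwise version of an equation between composites in `Grp`. -/
lemma elem_comp {A B B' D : GrpCat.{u}} {f₁ : A ⟶ B} {g₁ : B ⟶ D} {f₂ : A ⟶ B'} {g₂ : B' ⟶ D}
    (h : f₁ ≫ g₁ = f₂ ≫ g₂) (a : ↥A) : g₁.hom (f₁.hom a) = g₂.hom (f₂.hom a) := by
  exact congrArg (fun φ : A ⟶ D => φ.hom a) h

lemma elem_comp_id {A B : GrpCat.{u}} {f : A ⟶ B} {g : B ⟶ A} (h : f ≫ g = 𝟙 A) (a : ↥A) :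
    g.hom (f.hom a) = a := by
  exact congrArg (fun φ : A ⟶ A => φ.hom a) h

end Helpers

end TwistedSG

/-- for a nonsingular twisted structure `δ` on a small category `C` with
coefficients in a simplicial group `G`, the twisted faces and degeneracies on the sequence of
groups `{F^G[C]_n}` satisfy all the simplicial identities; hence `F^G_δ[C]` is a simplicial
group. -/
theorem TwistedSG.simplicial_identities {C : Type u} [SmallCategory C]
    (G : SimplicialObject GrpCat.{u}) (a₀ : C) (δ : C → (G ≅ G))
    (hcomm : ∀ v w : C, (Nonempty (v ⟶ w) ∨ Nonempty (w ⟶ v)) →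
      (δ v).hom ≫ (δ w).hom = (δ w).hom ≫ (δ v).hom) :
    -- (1) `d_i^δ ∘ d_j^δ = d_j^δ ∘ d_{i+1}^δ` for `i ≥ j`
    (∀ (n : ℕ) (i j : Fin (n + 2)), j ≤ i →
      (dFace C G a₀ δ i).comp (dFace C G a₀ δ j.castSucc) =
        (dFace C G a₀ δ j).comp (dFace C G a₀ δ i.succ)) ∧
    -- (2) `s_j^δ ∘ s_i^δ = s_{i+1}^δ ∘ s_j^δ` for `i ≥ j`
    (∀ (n : ℕ) (i j : Fin (n + 1)), j ≤ i →
      (sDegen C G a₀ δ j.castSucc).comp (sDegen C G a₀ δ i) =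
        (sDegen C G a₀ δ i.succ).comp (sDegen C G a₀ δ j)) ∧
    -- (3) `d_i^δ ∘ s_j^δ = s_{j-1}^δ ∘ d_i^δ` for `i < j`
    (∀ (n : ℕ) (i : Fin (n + 2)) (j : Fin (n + 1)), i ≤ j.castSucc →
      (dFace C G a₀ δ i.castSucc).comp (sDegen C G a₀ δ j.succ) =
        (sDegen C G a₀ δ j).comp (dFace C G a₀ δ i)) ∧
    -- (4) `d_j^δ ∘ s_j^δ = id = d_{j+1}^δ ∘ s_j^δ`
    (∀ (n : ℕ) (j : Fin (n + 1)),
      (dFace C G a₀ δ j.castSucc).comp (sDegen C G a₀ δ j) = MonoidHom.id _ ∧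
      (dFace C G a₀ δ j.succ).comp (sDegen C G a₀ δ j) = MonoidHom.id _) ∧
    -- (5) `d_i^δ ∘ s_j^δ = s_j^δ ∘ d_{i-1}^δ` for `i > j + 1`
    (∀ (n : ℕ) (i : Fin (n + 2)) (j : Fin (n + 1)), j.castSucc < i →
      (dFace C G a₀ δ i.succ).comp (sDegen C G a₀ δ j.castSucc) =
        (sDegen C G a₀ δ j).comp (dFace C G a₀ δ i)) := by
  refine ⟨?_, ?_, ?_, ?_, ?_⟩
  · -- (1)
    intro n i j hji
    apply FG_hom_ext
    intro x g
    rw [MonoidHom.comp_apply, MonoidHom.comp_apply, dFace_mk, dFace_mk, dFace_mk, dFace_mk]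
    have hv1 : (nerveFace C j.castSucc x).obj i = x.obj i.succ := by
      show x.obj (j.castSucc.succAbove i) = _
      rw [Fin.succAbove_castSucc_of_le _ _ hji]
    have hv2 : (nerveFace C i.succ x).obj j = x.obj j.castSucc := by
      show x.obj (i.succ.succAbove j) = _
      rw [Fin.succAbove_of_castSucc_lt _ _ (Fin.castSucc_lt_succ_iff.mpr hji)]
    rw [hv1, hv2]
    have hs : nerveFace C i (nerveFace C j.castSucc x) = nerveFace C j (nerveFace C i.succ x) := by
      have h := SimplicialObject.δ_comp_δ (X := nerve C) (i := j) (j := i) hji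
      exact (congrArg (fun φ => φ x) h).symm
    rw [hs]
    refine congrArg _ (congrArg _ ?_)
    rw [natδ, natδ]
    have hG : ((G.δ i).hom : Gn G (n + 1) →* Gn G n)
          (((G.δ j.castSucc).hom : Gn G (n + 2) →* Gn G (n + 1)) g)
        = ((G.δ j).hom : Gn G (n + 1) →* Gn G n)
          (((G.δ i.succ).hom : Gn G (n + 2) →* Gn G (n + 1)) g) := by
      have h := SimplicialObject.δ_comp_δ (X := G) (i := j) (j := i) hji
      exact (elem_comp h g).symm
    rw [hG]
    exact comm_app (hcomm _ _ (Or.inl (vert_mor x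
      (le_of_lt (Fin.castSucc_lt_succ_iff.mpr hji))))) _ _
  · -- (2)
    intro n i j hji
    apply FG_hom_ext
    intro x g
    rw [MonoidHom.comp_apply, MonoidHom.comp_apply, sDegen_mk, sDegen_mk, sDegen_mk, sDegen_mk]
    have hv1 : (nerveDegen C i x).obj j.castSucc = x.obj j := by
      show x.obj (i.predAbove j.castSucc) = _
      rw [Fin.predAbove_castSucc_of_le _ _ hji]
    have hv2 : (nerveDegen C j x).obj i.succ = x.obj i := by
      show x.obj (j.predAbove i.succ) = _
      rw [Fin.predAbove_succ_of_le _ _ hji]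
    rw [hv1, hv2]
    have hs : nerveDegen C j.castSucc (nerveDegen C i x)
        = nerveDegen C i.succ (nerveDegen C j x) := by
      have h := SimplicialObject.σ_comp_σ (X := nerve C) (i := j) (j := i) hji
      exact congrArg (fun φ => φ x) h
    rw [hs]
    refine congrArg _ (congrArg _ ?_)
    rw [natσ, natσ]
    have hG : ((G.σ j.castSucc).hom : Gn G (n + 1) →* Gn G (n + 2))
          (((G.σ i).hom : Gn G n →* Gn G (n + 1)) g)
        = ((G.σ i.succ).hom : Gn G (n + 1) →* Gn G (n + 2))
          (((G.σ j).hom : Gn G n →* Gn G (n + 1)) g) := by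
      have h := SimplicialObject.σ_comp_σ (X := G) (i := j) (j := i) hji
      exact elem_comp h g
    rw [hG]
    exact comm_app (inv_inv_comm (hcomm _ _ (Or.inl (vert_mor x hji)))) _ _
  · -- (3)
    intro n i j hij
    apply FG_hom_ext
    intro x g
    rw [MonoidHom.comp_apply, MonoidHom.comp_apply, sDegen_mk, dFace_mk, dFace_mk, sDegen_mk]
    have hv1 : (nerveDegen C j.succ x).obj i.castSucc = x.obj i := by
      show x.obj ((j.succ).predAbove i.castSucc) = _
      rw [Fin.predAbove_of_le_castSucc _ _
        (Fin.castSucc_le_castSucc_iff.mpr (hij.trans (Fin.castSucc_lt_succ (i := j)).le)),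
        Fin.castPred_castSucc]
    have hv2 : (nerveFace C i x).obj j = x.obj j.succ := by
      show x.obj (i.succAbove j) = _
      rw [Fin.succAbove_of_le_castSucc _ _ hij]
    rw [hv1, hv2]
    have hs : nerveFace C i.castSucc (nerveDegen C j.succ x)
        = nerveDegen C j (nerveFace C i x) := by
      have h := SimplicialObject.δ_comp_σ_of_le (X := nerve C) hij
      exact congrArg (fun φ => φ x) h
    rw [hs]
    refine congrArg _ (congrArg _ ?_)
    rw [natδ, natσ]
    have hG : ((G.δ i.castSucc).hom : Gn G (n + 2) →* Gn G (n + 1))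
          (((G.σ j.succ).hom : Gn G (n + 1) →* Gn G (n + 2)) g)
        = ((G.σ j).hom : Gn G n →* Gn G (n + 1))
          (((G.δ i).hom : Gn G (n + 1) →* Gn G n) g) := by
      have h := SimplicialObject.δ_comp_σ_of_le (X := G) hij
      exact elem_comp h g
    rw [hG]
    exact comm_app (inv_hom_comm (hcomm _ _ (Or.inl (vert_mor x
      (hij.trans (Fin.castSucc_lt_succ (i := j)).le))))) _ _
  · -- (4)
    intro n j
    constructor
    · apply FG_hom_ext
      intro x g
      rw [MonoidHom.comp_apply, sDegen_mk, dFace_mk, MonoidHom.id_apply]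
      have hv : (nerveDegen C j x).obj j.castSucc = x.obj j := by
        show x.obj (j.predAbove j.castSucc) = _
        rw [Fin.predAbove_castSucc_self]
      rw [hv]
      have hs : nerveFace C j.castSucc (nerveDegen C j x) = x := by
        have h := SimplicialObject.δ_comp_σ_self (X := nerve C) (i := j)
        exact congrArg (fun φ => φ x) h
      rw [hs]
      refine congrArg _ (congrArg _ ?_)
      rw [natδ]
      have hG : ((G.δ j.castSucc).hom : Gn G (n + 1) →* Gn G n)
          (((G.σ j).hom : Gn G n →* Gn G (n + 1)) g) = g := by
        have h := SimplicialObject.δ_comp_σ_self (X := G) (i := j)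
        exact elem_comp_id h g
      rw [hG]
      exact elem_comp_id (Iso.inv_hom_id_app (δ (x.obj j)) _) g
    · apply FG_hom_ext
      intro x g
      rw [MonoidHom.comp_apply, sDegen_mk, dFace_mk, MonoidHom.id_apply]
      have hv : (nerveDegen C j x).obj j.succ = x.obj j := by
        show x.obj (j.predAbove j.succ) = _
        rw [Fin.predAbove_succ_self]
      rw [hv]
      have hs : nerveFace C j.succ (nerveDegen C j x) = x := by
        have h := SimplicialObject.δ_comp_σ_succ (X := nerve C) (i := j)
        exact congrArg (fun φ => φ x) h
      rw [hs]
      refine congrArg _ (congrArg _ ?_)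
      rw [natδ]
      have hG : ((G.δ j.succ).hom : Gn G (n + 1) →* Gn G n)
          (((G.σ j).hom : Gn G n →* Gn G (n + 1)) g) = g := by
        have h := SimplicialObject.δ_comp_σ_succ (X := G) (i := j)
        exact elem_comp_id h g
      rw [hG]
      exact elem_comp_id (Iso.inv_hom_id_app (δ (x.obj j)) _) g
  · -- (5)
    intro n i j hji
    apply FG_hom_ext
    intro x g
    rw [MonoidHom.comp_apply, MonoidHom.comp_apply, sDegen_mk, dFace_mk, dFace_mk, sDegen_mk]
    have hv1 : (nerveDegen C j.castSucc x).obj i.succ = x.obj i := by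
      show x.obj ((j.castSucc).predAbove i.succ) = _
      rw [Fin.predAbove_of_castSucc_lt _ _ (Fin.castSucc_lt_succ_iff.mpr hji.le),
        Fin.pred_succ]
    have hv2 : (nerveFace C i x).obj j = x.obj j.castSucc := by
      show x.obj (i.succAbove j) = _
      rw [Fin.succAbove_of_castSucc_lt _ _ hji]
    rw [hv1, hv2]
    have hs : nerveFace C i.succ (nerveDegen C j.castSucc x)
        = nerveDegen C j (nerveFace C i x) := by
      have h := SimplicialObject.δ_comp_σ_of_gt (X := nerve C) hji
      exact congrArg (fun φ => φ x) h
    rw [hs]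
    refine congrArg _ (congrArg _ ?_)
    rw [natδ, natσ]
    have hG : ((G.δ i.succ).hom : Gn G (n + 2) →* Gn G (n + 1))
          (((G.σ j.castSucc).hom : Gn G (n + 1) →* Gn G (n + 2)) g)
        = ((G.σ j).hom : Gn G n →* Gn G (n + 1))
          (((G.δ i).hom : Gn G (n + 1) →* Gn G n) g) := by
      have h := SimplicialObject.δ_comp_σ_of_gt (X := G) hji
      exact elem_comp h g
    rw [hG]
    exact comm_app (inv_hom_comm (hcomm _ _ (Or.inr (vert_mor x hji.le)))) _ _
end
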